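/- Consider a single-layer GRU with weights W_z, W_f, W_r ∈ ℝ^{n_x×n_u}, U_z, U_f, U_r ∈ ℝ^{n_x×n_x}, U_o ∈ ℝ^{n_y×n_x}, biases b_z, b_f, b_r ∈ ℝ^{n_x}, b_o ∈ ℝ^{n_y}, and its Luenberger-like observer with gains L_z, L_f ∈ ℝ^{n_x×n_y}. Fix x̌ ≥ 1. Let x, x̂ ∈ ℝ^{n_x} with ‖x‖_∞ ≤ x̌ and ‖x̂‖_∞ ≤ x̌, let u ∈ ℝ^{n_u} with ‖u‖_∞ ≤ 1, let y = U_o x + b_o and ŷ = U_o x̂ + b_o, and define the successor states x⁺ = z ∘ x + (1 − z) ∘ r and x̂⁺ = ẑ ∘ x̂ + (1 − ẑ) ∘ r̂, where z = σ(W_z u + U_z x + b_z), f = σ(W_f u + U_f x + b_f), r = tanh(W_r u + U_r (f ∘ x) + b_r), ẑ = σ(W_z u + U_z x̂ + b_z + L_z(y − ŷ)), f̂ = σ(W_f u + U_f x̂ + b_f + L_f(y − ŷ)), r̂ = tanh(W_r u + U_r (f̂ ∘ x̂) + b_r). Then ‖x⁺ − x̂⁺‖_∞ ≤ max(κ_o(σ̌_z,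 L_z, L_f), κ_o(1 − σ̌_z, L_z, L_f))·‖x − x̂‖_∞. -/

import Mathlib

open Matrix

/-- The logistic sigmoid. -/
noncomputable def sigmoid (s : ℝ) : ℝ := 1 / (1 + Real.exp (-s))

/-- ∞-norm on `Fin n → ℝ`. -/
noncomputable def normInf {n : ℕ} (v : Fin n → ℝ) : ℝ := ⨆ i, |v i|

/-- Induced ∞-norm of a matrix (maximum absolute row sum). -/
noncomputable def matNormInf {n m : ℕ} (A : Matrix (Fin n) (Fin m) ℝ) : ℝ :=
  ⨆ i, ∑ j, |A i j|

lemma sigmoid_pos (s : ℝ) : 0 < sigmoid s := by unfold sigmoid; positivity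

lemma sigmoid_lt_one (s : ℝ) : sigmoid s < 1 := by
  unfold sigmoid
  rw [div_lt_one (by positivity)]
  linarith [Real.exp_pos (-s)]

lemma sigmoid_mono {a b : ℝ} (h : a ≤ b) : sigmoid a ≤ sigmoid b := by
  unfold sigmoid
  have h1 : Real.exp (-b) ≤ Real.exp (-a) := Real.exp_le_exp.2 (neg_le_neg h)
  have h2 : (0:ℝ) < 1 + Real.exp (-b) := by positivity
  apply one_div_le_one_div_of_le h2
  linarith

lemma sigmoid_neg (s : ℝ) : sigmoid (-s) = 1 - sigmoid s := by
  unfold sigmoid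
  have h1 : (0:ℝ) < 1 + Real.exp (-s) := by positivity
  have h2 : (0:ℝ) < 1 + Real.exp s := by positivity
  have h4 : Real.exp s * Real.exp (-s) = 1 := by
    rw [← Real.exp_add]; simp
  rw [neg_neg]
  field_simp
  nlinarith [h4]

lemma sigmoid_zero : sigmoid 0 = 1/2 := by
  unfold sigmoid; rw [neg_zero, Real.exp_zero]; norm_num

lemma sigmoid_hasDeriv (x : ℝ) :
    HasDerivAt sigmoid (Real.exp (-x) / (1 + Real.exp (-x))^2) x := by
  have h : HasDerivAt (fun s : ℝ => 1 + Real.exp (-s)) (-Real.exp (-x)) x := by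
    have h0 : HasDerivAt (fun s : ℝ => Real.exp (-s)) (Real.exp (-x) * (-1)) x :=
      (Real.hasDerivAt_exp (-x)).comp x ((hasDerivAt_id x).neg)
    simpa using h0.const_add 1
  have h2 := h.inv (by positivity)
  have : sigmoid = fun s : ℝ => (1 + Real.exp (-s))⁻¹ := by
    funext s; simp [sigmoid, one_div]
  rw [this]
  exact h2.congr_deriv (by ring)

lemma sigmoid_lipschitz (a b : ℝ) : |sigmoid a - sigmoid b| ≤ (1/4) * |a - b| := by
  have := Convex.norm_image_sub_le_of_norm_hasDerivWithin_le
    (f := sigmoid) (f' := fun x => Real.exp (-x) / (1 + Real.exp (-x))^2) (C := 1/4)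
    (s := Set.univ)
    (fun x _ => (sigmoid_hasDeriv x).hasDerivWithinAt)
    (fun x _ => by
      rw [Real.norm_eq_abs, abs_of_nonneg (by positivity), div_le_iff₀ (by positivity)]
      nlinarith [sq_nonneg (1 - Real.exp (-x))])
    convex_univ (Set.mem_univ b) (Set.mem_univ a)
  simpa [Real.norm_eq_abs] using this

lemma sigmoid_bounds {s c : ℝ} (h : |s| ≤ c) :
    1 - sigmoid c ≤ sigmoid s ∧ sigmoid s ≤ sigmoid c :=
  ⟨by rw [← sigmoid_neg]; exact sigmoid_mono (neg_le_of_abs_le h),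
   sigmoid_mono (le_of_abs_le h)⟩

lemma tanh_eq_sigmoid (x : ℝ) : Real.tanh x = 2 * sigmoid (2*x) - 1 := by
  rw [Real.tanh_eq_sinh_div_cosh, Real.sinh_eq, Real.cosh_eq]
  unfold sigmoid
  have h1 := Real.exp_pos x
  have h2 := Real.exp_pos (-x)
  have h3 : Real.exp (-(2*x)) = Real.exp (-x) * Real.exp (-x) := by
    rw [← Real.exp_add]; ring_nf
  have h4 : Real.exp x * Real.exp (-x) = 1 := by rw [← Real.exp_add]; simp
  rw [h3]
  have h5 : (0:ℝ) < 1 + Real.exp (-x) * Real.exp (-x) := by positivity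
  have h6 : (0:ℝ) < Real.exp x + Real.exp (-x) := by positivity
  field_simp
  nlinarith [h4]

lemma tanh_lipschitz (a b : ℝ) : |Real.tanh a - Real.tanh b| ≤ |a - b| := by
  rw [tanh_eq_sigmoid, tanh_eq_sigmoid]
  have h := sigmoid_lipschitz (2*a) (2*b)
  have h2 : |2*a - 2*b| = 2 * |a - b| := by
    have : (2:ℝ)*a - 2*b = 2*(a-b) := by ring
    rw [this, abs_mul, abs_two]
  have h3 : |2 * sigmoid (2*a) - 1 - (2 * sigmoid (2*b) - 1)|
      = 2 * |sigmoid (2*a) - sigmoid (2*b)| := by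
    have : 2 * sigmoid (2*a) - 1 - (2 * sigmoid (2*b) - 1)
        = 2 * (sigmoid (2*a) - sigmoid (2*b)) := by ring
    rw [this, abs_mul, abs_two]
  rw [h3]
  rw [h2] at h
  linarith

lemma tanh_abs_le {s c : ℝ} (h : |s| ≤ c) : |Real.tanh s| ≤ Real.tanh c := by
  rw [abs_le, tanh_eq_sigmoid, tanh_eq_sigmoid]
  constructor
  · have : sigmoid (-(2*c)) ≤ sigmoid (2*s) := by
      apply sigmoid_mono; have := neg_le_of_abs_le h; linarith
    rw [sigmoid_neg] at this; linarith
  · have : sigmoid (2*s) ≤ sigmoid (2*c) := by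
      apply sigmoid_mono; have := le_of_abs_le h; linarith
    linarith

lemma tanh_nonneg {c : ℝ} (h : 0 ≤ c) : 0 ≤ Real.tanh c := by
  rw [tanh_eq_sigmoid]
  have : sigmoid 0 ≤ sigmoid (2*c) := sigmoid_mono (by linarith)
  rw [sigmoid_zero] at this; linarith

lemma abs_le_normInf {n : ℕ} (v : Fin n → ℝ) (i : Fin n) : |v i| ≤ normInf v := by
  unfold normInf
  exact le_ciSup (f := fun i => |v i|) (Set.Finite.bddAbove (Set.finite_range _)) i

lemma normInf_nonneg {n : ℕ} (v : Fin n → ℝ) : 0 ≤ normInf v :=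
  Real.iSup_nonneg fun _ => abs_nonneg _

lemma rowSum_le_matNormInf {n m : ℕ} (A : Matrix (Fin n) (Fin m) ℝ) (i : Fin n) :
    ∑ j, |A i j| ≤ matNormInf A := by
  unfold matNormInf
  exact le_ciSup (f := fun i => ∑ j, |A i j|) (Set.Finite.bddAbove (Set.finite_range _)) i

lemma matNormInf_nonneg {n m : ℕ} (A : Matrix (Fin n) (Fin m) ℝ) : 0 ≤ matNormInf A :=
  Real.iSup_nonneg fun _ => Finset.sum_nonneg fun _ _ => abs_nonneg _

lemma mulVec_bound {n m : ℕ} (A : Matrix (Fin n) (Fin m) ℝ) (v : Fin m → ℝ) {c : ℝ}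
    (hv : ∀ j, |v j| ≤ c) (i : Fin n) : |A.mulVec v i| ≤ (∑ j, |A i j|) * c := by
  have h1 : |A.mulVec v i| ≤ ∑ j, |A i j * v j| := by
    simpa [Matrix.mulVec, dotProduct] using
      Finset.abs_sum_le_sum_abs (fun j => A i j * v j) Finset.univ
  refine h1.trans ?_
  rw [Finset.sum_mul]
  exact Finset.sum_le_sum fun j _ => by
    rw [abs_mul]; exact mul_le_mul_of_nonneg_left (hv j) (abs_nonneg _)

lemma mulVec_le {n m : ℕ} (A : Matrix (Fin n) (Fin m) ℝ) (v : Fin m → ℝ) (i : Fin n) :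
    |A.mulVec v i| ≤ matNormInf A * normInf v :=
  (mulVec_bound A v (fun j => abs_le_normInf v j) i).trans
    (mul_le_mul_of_nonneg_right (rowSum_le_matNormInf A i) (normInf_nonneg v))

lemma arg_bound {n m : ℕ} (W : Matrix (Fin n) (Fin m) ℝ) (U : Matrix (Fin n) (Fin n) ℝ)
    (b : Fin n → ℝ) (u : Fin m → ℝ) (v : Fin n → ℝ) (xc : ℝ)
    (hu : ∀ k, |u k| ≤ 1) (hv : ∀ k, |v k| ≤ xc) (j : Fin n) :
    |(W.mulVec u + U.mulVec v + b) j| ≤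
      ⨆ i, (∑ k, |W i k| + xc * ∑ k, |U i k| + |b i|) := by
  have h1 := mulVec_bound W u hu j
  have h2 := mulVec_bound U v hv j
  have h3 : ∑ k, |W j k| + xc * ∑ k, |U j k| + |b j| ≤
      ⨆ i, (∑ k, |W i k| + xc * ∑ k, |U i k| + |b i|) :=
    le_ciSup (f := fun i => ∑ k, |W i k| + xc * ∑ k, |U i k| + |b i|)
      (Set.Finite.bddAbove (Set.finite_range _)) j
  have h4 : |(W.mulVec u + U.mulVec v + b) j| ≤
      |W.mulVec u j| + |U.mulVec v j| + |b j| := by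
    simp only [Pi.add_apply]
    calc |W.mulVec u j + U.mulVec v j + b j|
        ≤ |W.mulVec u j + U.mulVec v j| + |b j| := abs_add_le _ _
      _ ≤ |W.mulVec u j| + |U.mulVec v j| + |b j| := by linarith [abs_add_le (W.mulVec u j) (U.mulVec v j)]
  nlinarith [h1, h2, h3, h4]

set_option maxHeartbeats 2000000 in
/-- one-step observation-error contraction for a GRU and its
Luenberger-like observer (core of Theorem 2). -/
theorem stmt_12 {nx nu ny : ℕ}
    (Wz Wf Wr : Matrix (Fin nx) (Fin nu) ℝ)
    (Uz Uf Ur : Matrix (Fin nx) (Fin nx) ℝ)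
    (Uo : Matrix (Fin ny) (Fin nx) ℝ)
    (bz bf br : Fin nx → ℝ) (bo : Fin ny → ℝ)
    (Lz Lf : Matrix (Fin nx) (Fin ny) ℝ)
    (xcheck : ℝ) (hxc : 1 ≤ xcheck)
    (x xhat : Fin nx → ℝ) (hx : normInf x ≤ xcheck) (hxhat : normInf xhat ≤ xcheck)
    (u : Fin nu → ℝ) (hu : normInf u ≤ 1) :
    let sigz : ℝ := sigmoid (⨆ i, (∑ j, |Wz i j| + xcheck * ∑ j, |Uz i j| + |bz i|))
    let sigf : ℝ := sigmoid (⨆ i, (∑ j, |Wf i j| + xcheck * ∑ j, |Uf i j| + |bf i|))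
    let phir : ℝ := Real.tanh (⨆ i, (∑ j, |Wr i j| + xcheck * ∑ j, |Ur i j| + |br i|))
    let kappao : ℝ → ℝ := fun z =>
      z + (1 - z) * ((1 / 4) * xcheck * matNormInf (Uf - Lf * Uo) + sigf) * matNormInf Ur +
        (1 / 4) * (phir + xcheck) * matNormInf (Uz - Lz * Uo)
    let y : Fin ny → ℝ := Uo.mulVec x + bo
    let yhat : Fin ny → ℝ := Uo.mulVec xhat + bo
    let z : Fin nx → ℝ := fun j => sigmoid ((Wz.mulVec u + Uz.mulVec x + bz) j)
    let f : Fin nx → ℝ := fun j => sigmoid ((Wf.mulVec u + Uf.mulVec x + bf) j)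
    let r : Fin nx → ℝ := fun j =>
      Real.tanh ((Wr.mulVec u + Ur.mulVec (fun i => f i * x i) + br) j)
    let zhat : Fin nx → ℝ := fun j =>
      sigmoid ((Wz.mulVec u + Uz.mulVec xhat + bz + Lz.mulVec (y - yhat)) j)
    let fhat : Fin nx → ℝ := fun j =>
      sigmoid ((Wf.mulVec u + Uf.mulVec xhat + bf + Lf.mulVec (y - yhat)) j)
    let rhat : Fin nx → ℝ := fun j =>
      Real.tanh ((Wr.mulVec u + Ur.mulVec (fun i => fhat i * xhat i) + br) j)
    let xplus : Fin nx → ℝ := fun j => z j * x j + (1 - z j) * r j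
    let xhatplus : Fin nx → ℝ := fun j => zhat j * xhat j + (1 - zhat j) * rhat j
    normInf (xplus - xhatplus) ≤
      max (kappao sigz) (kappao (1 - sigz)) * normInf (x - xhat) := by
  intro sigz sigf phir kappao y yhat z f r zhat fhat rhat xplus xhatplus
  have hxc0 : (0:ℝ) ≤ xcheck := by linarith
  set E := normInf (x - xhat) with hEdef
  have hE0 : 0 ≤ E := normInf_nonneg _
  have hxk : ∀ k, |x k| ≤ xcheck := fun k => (abs_le_normInf x k).trans hx
  have hxhk : ∀ k, |xhat k| ≤ xcheck := fun k => (abs_le_normInf xhat k).trans hxhat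
  have huk : ∀ k, |u k| ≤ 1 := fun k => (abs_le_normInf u k).trans hu
  have hek : ∀ k, |x k - xhat k| ≤ E := fun k => by
    have h := abs_le_normInf (x - xhat) k
    rw [hEdef]; simpa using h
  set Nz := matNormInf (Uz - Lz * Uo) with hNzdef
  set Nf := matNormInf (Uf - Lf * Uo) with hNfdef
  set Nr := matNormInf Ur with hNrdef
  have hNz0 : 0 ≤ Nz := matNormInf_nonneg _
  have hNf0 : 0 ≤ Nf := matNormInf_nonneg _
  have hNr0 : 0 ≤ Nr := matNormInf_nonneg _
  have hsigf0 : (0:ℝ) ≤ sigf := le_of_lt (sigmoid_pos _)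
  have hsigz0 : (0:ℝ) ≤ sigz := le_of_lt (sigmoid_pos _)
  have hsigz1 : sigz ≤ 1 := le_of_lt (sigmoid_lt_one _)
  have hsr0 : (0:ℝ) ≤ ⨆ i, (∑ jj, |Wr i jj| + xcheck * ∑ jj, |Ur i jj| + |br i|) :=
    Real.iSup_nonneg fun i => add_nonneg (add_nonneg
      (Finset.sum_nonneg fun _ _ => abs_nonneg _)
      (mul_nonneg hxc0 (Finset.sum_nonneg fun _ _ => abs_nonneg _))) (abs_nonneg _)
  have hphir0 : (0:ℝ) ≤ phir := tanh_nonneg hsr0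
  -- y - yhat
  have hyy : y - yhat = Uo.mulVec (x - xhat) := by
    show (Uo.mulVec x + bo) - (Uo.mulVec xhat + bo) = _
    rw [Matrix.mulVec_sub]; abel
  -- difference of z arguments
  have hz_lip : ∀ j : Fin nx, |z j - zhat j| ≤ 1/4 * (Nz * E) := by
    intro j
    have hdiff : (Wz.mulVec u + Uz.mulVec x + bz) j
        - (Wz.mulVec u + Uz.mulVec xhat + bz + Lz.mulVec (y - yhat)) j
        = ((Uz - Lz * Uo).mulVec (x - xhat)) j := by
      rw [hyy]
      simp only [Matrix.sub_mulVec, Matrix.mulVec_sub, ← Matrix.mulVec_mulVec,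
        Pi.add_apply, Pi.sub_apply]
      ring
    have h1 : |z j - zhat j| ≤ 1/4 * |(Wz.mulVec u + Uz.mulVec x + bz) j
        - (Wz.mulVec u + Uz.mulVec xhat + bz + Lz.mulVec (y - yhat)) j| :=
      sigmoid_lipschitz _ _
    have h2 : |((Uz - Lz * Uo).mulVec (x - xhat)) j| ≤ Nz * E := mulVec_le _ _ j
    rw [hdiff] at h1
    linarith
  have hf_lip : ∀ j : Fin nx, |f j - fhat j| ≤ 1/4 * (Nf * E) := by
    intro j
    have hdiff : (Wf.mulVec u + Uf.mulVec x + bf) j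
        - (Wf.mulVec u + Uf.mulVec xhat + bf + Lf.mulVec (y - yhat)) j
        = ((Uf - Lf * Uo).mulVec (x - xhat)) j := by
      rw [hyy]
      simp only [Matrix.sub_mulVec, Matrix.mulVec_sub, ← Matrix.mulVec_mulVec,
        Pi.add_apply, Pi.sub_apply]
      ring
    have h1 : |f j - fhat j| ≤ 1/4 * |(Wf.mulVec u + Uf.mulVec x + bf) j
        - (Wf.mulVec u + Uf.mulVec xhat + bf + Lf.mulVec (y - yhat)) j| :=
      sigmoid_lipschitz _ _
    have h2 : |((Uf - Lf * Uo).mulVec (x - xhat)) j| ≤ Nf * E := mulVec_le _ _ j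
    rw [hdiff] at h1
    linarith
  have hz_mem : ∀ j, 1 - sigz ≤ z j ∧ z j ≤ sigz := fun j =>
    sigmoid_bounds (arg_bound Wz Uz bz u x xcheck huk hxk j)
  have hf_ub : ∀ i, f i ≤ sigf := fun i =>
    (sigmoid_bounds (arg_bound Wf Uf bf u x xcheck huk hxk i)).2
  have hfhat01 : ∀ i, |fhat i| ≤ 1 := fun i => by
    have h1 : 0 < fhat i := sigmoid_pos _
    have h2 : fhat i < 1 := sigmoid_lt_one _
    rw [abs_of_pos h1]; linarith
  have hfx : ∀ k, |fhat k * xhat k| ≤ xcheck := fun k => by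
    rw [abs_mul]
    calc |fhat k| * |xhat k| ≤ 1 * xcheck :=
          mul_le_mul (hfhat01 k) (hxhk k) (abs_nonneg _) zero_le_one
      _ = xcheck := one_mul _
  have hrhat : ∀ j, |rhat j| ≤ phir := fun j =>
    tanh_abs_le (arg_bound Wr Ur br u (fun i => fhat i * xhat i) xcheck huk hfx j)
  have hNfE0 : (0:ℝ) ≤ 1/4 * (Nf * E) := by
    have := mul_nonneg hNf0 hE0; linarith
  have hNzE0 : (0:ℝ) ≤ 1/4 * (Nz * E) := by
    have := mul_nonneg hNz0 hE0; linarith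
  have hinner : ∀ i, |f i * x i - fhat i * xhat i| ≤ sigf * E + 1/4 * (Nf * E) * xcheck := by
    intro i
    have hsplit : f i * x i - fhat i * xhat i
        = f i * (x i - xhat i) + (f i - fhat i) * xhat i := by ring
    rw [hsplit]
    have hfabs : |f i| ≤ sigf := by
      rw [abs_of_pos (sigmoid_pos _)]; exact hf_ub i
    have h2 : |f i| * |x i - xhat i| ≤ sigf * E :=
      mul_le_mul hfabs (hek i) (abs_nonneg _) hsigf0
    have h3 : |f i - fhat i| * |xhat i| ≤ 1/4 * (Nf * E) * xcheck :=
      mul_le_mul (hf_lip i) (hxhk i) (abs_nonneg _) hNfE0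
    calc |f i * (x i - xhat i) + (f i - fhat i) * xhat i|
        ≤ |f i * (x i - xhat i)| + |(f i - fhat i) * xhat i| := abs_add_le _ _
      _ = |f i| * |x i - xhat i| + |f i - fhat i| * |xhat i| := by rw [abs_mul, abs_mul]
      _ ≤ sigf * E + 1/4 * (Nf * E) * xcheck := add_le_add h2 h3
  have hM0 : (0:ℝ) ≤ sigf * E + 1/4 * (Nf * E) * xcheck := by
    have := mul_nonneg hsigf0 hE0
    have := mul_nonneg hNfE0 hxc0
    linarith
  have hr_lip : ∀ j, |r j - rhat j| ≤ Nr * (sigf * E + 1/4 * (Nf * E) * xcheck) := by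
    intro j
    have hdiff : (Wr.mulVec u + Ur.mulVec (fun i => f i * x i) + br) j
        - (Wr.mulVec u + Ur.mulVec (fun i => fhat i * xhat i) + br) j
        = (Ur.mulVec (fun i => f i * x i - fhat i * xhat i)) j := by
      have heq : (fun i => f i * x i - fhat i * xhat i)
          = (fun i => f i * x i) - (fun i => fhat i * xhat i) := rfl
      rw [heq, Matrix.mulVec_sub]
      simp only [Pi.add_apply, Pi.sub_apply]
      ring
    have h1 : |r j - rhat j| ≤ |(Wr.mulVec u + Ur.mulVec (fun i => f i * x i) + br) j
        - (Wr.mulVec u + Ur.mulVec (fun i => fhat i * xhat i) + br) j| :=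
      tanh_lipschitz _ _
    rw [hdiff] at h1
    have h2 := mulVec_bound Ur (fun i => f i * x i - fhat i * xhat i) hinner j
    have h3 : (∑ k, |Ur j k|) * (sigf * E + 1/4 * (Nf * E) * xcheck)
        ≤ Nr * (sigf * E + 1/4 * (Nf * E) * xcheck) :=
      mul_le_mul_of_nonneg_right (rowSum_le_matNormInf Ur j) hM0
    calc |r j - rhat j| ≤ _ := h1
      _ ≤ _ := h2
      _ ≤ _ := h3
  have hcoord : ∀ j, |xplus j - xhatplus j| ≤ kappao (z j) * E := by
    intro j
    have hz01 : 0 < z j := sigmoid_pos _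
    have hz1 : z j < 1 := sigmoid_lt_one _
    have hid : xplus j - xhatplus j
        = z j * (x j - xhat j) + (z j - zhat j) * (xhat j - rhat j)
          + (1 - z j) * (r j - rhat j) := by
      show z j * x j + (1 - z j) * r j - (zhat j * xhat j + (1 - zhat j) * rhat j) = _
      ring
    have t1 : |z j * (x j - xhat j)| ≤ z j * E := by
      rw [abs_mul, abs_of_pos hz01]
      exact mul_le_mul_of_nonneg_left (hek j) (le_of_lt hz01)
    have t2 : |(z j - zhat j) * (xhat j - rhat j)| ≤ (1/4 * (Nz * E)) * (xcheck + phir) := by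
      rw [abs_mul]
      have hxr : |xhat j - rhat j| ≤ xcheck + phir := by
        have h := abs_add_le (xhat j) (-(rhat j))
        rw [abs_neg] at h
        have : |xhat j - rhat j| ≤ |xhat j| + |rhat j| := by
          rw [sub_eq_add_neg]; exact h
        linarith [hxhk j, hrhat j]
      exact mul_le_mul (hz_lip j) hxr (abs_nonneg _) hNzE0
    have t3 : |(1 - z j) * (r j - rhat j)|
        ≤ (1 - z j) * (Nr * (sigf * E + 1/4 * (Nf * E) * xcheck)) := by
      rw [abs_mul, abs_of_pos (by linarith : (0:ℝ) < 1 - z j)]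
      exact mul_le_mul_of_nonneg_left (hr_lip j) (by linarith)
    have hkey : z j * E + (1/4 * (Nz * E)) * (xcheck + phir)
        + (1 - z j) * (Nr * (sigf * E + 1/4 * (Nf * E) * xcheck)) = kappao (z j) * E := by
      show _ = (z j + (1 - z j) * ((1/4) * xcheck * Nf + sigf) * Nr
        + (1/4) * (phir + xcheck) * Nz) * E
      ring
    rw [hid]
    calc |z j * (x j - xhat j) + (z j - zhat j) * (xhat j - rhat j)
          + (1 - z j) * (r j - rhat j)|
        ≤ |z j * (x j - xhat j) + (z j - zhat j) * (xhat j - rhat j)|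
          + |(1 - z j) * (r j - rhat j)| := abs_add_le _ _
      _ ≤ |z j * (x j - xhat j)| + |(z j - zhat j) * (xhat j - rhat j)|
          + |(1 - z j) * (r j - rhat j)| := by linarith [abs_add_le (z j * (x j - xhat j)) ((z j - zhat j) * (xhat j - rhat j))]
      _ ≤ kappao (z j) * E := by rw [← hkey]; linarith
  have hkap_le : ∀ t : ℝ, 1 - sigz ≤ t → t ≤ sigz →
      kappao t ≤ max (kappao sigz) (kappao (1 - sigz)) := by
    intro t h1 h2
    have e1 : kappao t = t + (1 - t) * ((1/4) * xcheck * Nf + sigf) * Nr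
        + (1/4) * (phir + xcheck) * Nz := rfl
    have e2 : kappao sigz = sigz + (1 - sigz) * ((1/4) * xcheck * Nf + sigf) * Nr
        + (1/4) * (phir + xcheck) * Nz := rfl
    have e3 : kappao (1 - sigz) = (1 - sigz) + (1 - (1 - sigz)) * ((1/4) * xcheck * Nf + sigf) * Nr
        + (1/4) * (phir + xcheck) * Nz := rfl
    rcases le_total (((1/4) * xcheck * Nf + sigf) * Nr) 1 with h | h
    · refine le_max_of_le_left ?_
      rw [e1, e2]
      nlinarith [mul_nonneg (sub_nonneg.2 h2) (sub_nonneg.2 h)]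
    · refine le_max_of_le_right ?_
      rw [e1, e3]
      nlinarith [mul_nonneg (sub_nonneg.2 h1) (sub_nonneg.2 h)]
  have hK0 : 0 ≤ max (kappao sigz) (kappao (1 - sigz)) := by
    have e2 : kappao sigz = sigz + (1 - sigz) * ((1/4) * xcheck * Nf + sigf) * Nr
        + (1/4) * (phir + xcheck) * Nz := rfl
    have h0 : 0 ≤ kappao sigz := by
      rw [e2]
      have ha : 0 ≤ (1 - sigz) * ((1/4) * xcheck * Nf + sigf) * Nr := by
        apply mul_nonneg (mul_nonneg (by linarith) _) hNr0
        have := mul_nonneg hxc0 hNf0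
        linarith
      have hb : 0 ≤ (1/4) * (phir + xcheck) * Nz := by
        apply mul_nonneg _ hNz0
        linarith
      linarith
    exact le_trans h0 (le_max_left _ _)
  have hfinal : ∀ j, |(xplus - xhatplus) j| ≤ max (kappao sigz) (kappao (1 - sigz)) * E := by
    intro j
    have h1 := (hcoord j).trans
      (mul_le_mul_of_nonneg_right (hkap_le (z j) (hz_mem j).1 (hz_mem j).2) hE0)
    simpa using h1
  show normInf (xplus - xhatplus) ≤ _
  unfold normInf
  exact Real.iSup_le hfinal (mul_nonneg hK0 hE0)
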